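/- arXiv:2102.05307 — 2 statements merged into one kernel-verified Lean document; each statement's English description precedes it below -/
import Mathlib

section
/- Let κ ≥ 1 be a natural number, m = 2κ+1, α₀ ∈ (0,1), and let η₁, η₂ be reals with 0 < η₂ < η₁. Set d = m^{1−η₂}, ε = m^{−η₁}, a = ⌊(1−α₀)m − d⌋ and â = ⌊a − d⌋, and assume 1 ≤ a and d ≥ 2. Let (w_k)_{k=1}^m and (u_k)_{k=1}^m be families of nonnegative real numbers, each family having pairwise distinct values, such that: (i) |u_k − w_k| < ε/2 for every k; and (ii) for every k, if r(w_k) ≤ a − d then w_{(a)} − w_k ≥ ε. Then the cardinality of the set difference {k : r(u_k) ≤ (1−α₀)m} \ {k : r(w_k) ≤ â} is at most 4·m^{1−η₂}. (This is the pathwise content of Lemma 3.3(b): the rank filter based on the observed values u selects at most 4m^{1−η₂} indices more than the filter based on the Brownian-type values w.) -/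
open Finset

/-- The rank of `w k` among the family `(w k')_{k'}`:
the number of indices `k'` with `w k' ≤ w k`. -/
noncomputable def rank {m : ℕ} (w : Fin m → ℝ) (k : Fin m) : ℕ :=
  (Finset.univ.filter fun k' => w k' ≤ w k).card

/-- The `r`-th order statistic (the `r`-th smallest value) of the family `w`.
For a family with pairwise distinct values, this is the unique value of rank `r`. -/
noncomputable def orderStat {m : ℕ} (w : Fin m → ℝ) (r : ℕ) : ℝ :=
  if h : ∃ k, rank w k = r then w h.choose else 0

lemma myRank_pos {m : ℕ} (w : Fin m → ℝ) (k : Fin m) : 1 ≤ rank w k :=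
  Finset.card_pos.mpr ⟨k, by simp⟩

lemma myRank_le {m : ℕ} (w : Fin m → ℝ) (k : Fin m) : rank w k ≤ m := by
  have := Finset.card_filter_le Finset.univ (fun k' => w k' ≤ w k)
  simpa [rank] using this

lemma rank_lt_rank {m : ℕ} {w : Fin m → ℝ} {k k' : Fin m} (h : w k < w k') :
    rank w k < rank w k' := by
  apply Finset.card_lt_card
  have hsub : (Finset.univ.filter fun x => w x ≤ w k) ⊆
      (Finset.univ.filter fun x => w x ≤ w k') := by
    intro x hx
    simp only [Finset.mem_filter, Finset.mem_univ, true_and] at hx ⊢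
    linarith
  refine (Finset.ssubset_iff_of_subset hsub).mpr ⟨k', ?_, ?_⟩
  · simp
  · simp only [Finset.mem_filter, Finset.mem_univ, true_and]
    linarith

lemma rank_injective {m : ℕ} {w : Fin m → ℝ} (hw : Function.Injective w) :
    Function.Injective (rank w) := by
  intro k k' h
  by_contra hne
  have hwne : w k ≠ w k' := fun he => hne (hw he)
  rcases lt_or_gt_of_ne hwne with hlt | hgt
  · exact absurd h (Nat.ne_of_lt (rank_lt_rank hlt))
  · exact absurd h.symm (Nat.ne_of_lt (rank_lt_rank hgt))

lemma image_rank {m : ℕ} {w : Fin m → ℝ} (hw : Function.Injective w) :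
    Finset.image (rank w) Finset.univ = Finset.Icc 1 m := by
  apply Finset.eq_of_subset_of_card_le
  · intro r hr
    obtain ⟨k, -, rfl⟩ := Finset.mem_image.mp hr
    exact Finset.mem_Icc.mpr ⟨myRank_pos w k, myRank_le w k⟩
  · rw [Finset.card_image_of_injective _ (rank_injective hw), Nat.card_Icc]
    simp

lemma card_filter_myRank_le {m : ℕ} {w : Fin m → ℝ} (hw : Function.Injective w) (t : ℕ) :
    (Finset.univ.filter fun k => rank w k ≤ t).card = min t m := by
  have h1 : ((Finset.univ.filter fun k => rank w k ≤ t).image (rank w)) =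
      Finset.Icc 1 (min t m) := by
    ext r
    simp only [Finset.mem_image, Finset.mem_filter, Finset.mem_univ, true_and,
      Finset.mem_Icc]
    constructor
    · rintro ⟨k, hk, rfl⟩
      exact ⟨myRank_pos w k, le_min hk (myRank_le w k)⟩
    · rintro ⟨hr1, hr2⟩
      have : r ∈ Finset.image (rank w) Finset.univ := by
        rw [image_rank hw]
        exact Finset.mem_Icc.mpr ⟨hr1, le_trans hr2 (min_le_right _ _)⟩
      obtain ⟨k, -, rfl⟩ := Finset.mem_image.mp this
      exact ⟨k, le_trans hr2 (min_le_left _ _), rfl⟩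
  calc (Finset.univ.filter fun k => rank w k ≤ t).card
      = ((Finset.univ.filter fun k => rank w k ≤ t).image (rank w)).card :=
        (Finset.card_image_of_injective _ (rank_injective hw)).symm
    _ = (Finset.Icc 1 (min t m)).card := by rw [h1]
    _ = min t m := by rw [Nat.card_Icc]; omega

lemma castle {n : ℕ} (hn : 1 ≤ n) (x : ℝ) : (n : ℝ) ≤ x ↔ n ≤ (⌊x⌋).toNat := by
  rw [show ((n : ℝ)) = (((n : ℤ)) : ℝ) by push_cast; ring, ← Int.le_floor]
  omega

/-- Pathwise content of Lemma 3.3(b) (glocal filtering): the rank filter based on the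
observed values `u` selects at most `4 m^{1-η₂}` indices more than the filter based on
the Brownian-type values `w`. -/
theorem stmt_1 (κ : ℕ) (hκ : 1 ≤ κ) (m : ℕ) (hm : m = 2 * κ + 1)
    (α₀ η₁ η₂ : ℝ) (hα₀ : α₀ ∈ Set.Ioo (0 : ℝ) 1) (hη₂ : 0 < η₂) (hη₁₂ : η₂ < η₁)
    (d ε : ℝ) (hd : d = (m : ℝ) ^ (1 - η₂)) (hε : ε = (m : ℝ) ^ (-η₁))
    (a : ℤ) (ha : a = ⌊(1 - α₀) * (m : ℝ) - d⌋)
    (ahat : ℤ) (hahat : ahat = ⌊(a : ℝ) - d⌋)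
    (ha1 : 1 ≤ a) (hd2 : 2 ≤ d)
    (w u : Fin m → ℝ) (hw0 : ∀ k, 0 ≤ w k) (hu0 : ∀ k, 0 ≤ u k)
    (hwinj : Function.Injective w) (huinj : Function.Injective u)
    (h1 : ∀ k, |u k - w k| < ε / 2)
    (h2 : ∀ k, (rank w k : ℝ) ≤ (a : ℝ) - d → orderStat w a.toNat - w k ≥ ε) :
    ((((Finset.univ.filter fun k => (rank u k : ℝ) ≤ (1 - α₀) * (m : ℝ)) \
        (Finset.univ.filter fun k => (rank w k : ℝ) ≤ (ahat : ℝ))).card : ℝ))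
      ≤ 4 * (m : ℝ) ^ (1 - η₂) := by
  have hmN : 3 ≤ m := by omega
  have hm0 : (0 : ℝ) < m := by
    have : (0 : ℕ) < m := by omega
    exact_mod_cast this
  have hd2R : (2 : ℝ) ≤ d := hd2
  have hfa : (a : ℝ) ≤ (1 - α₀) * m - d := by rw [ha]; exact Int.floor_le _
  have hfa' : (1 - α₀) * m - d < a + 1 := by rw [ha]; exact Int.lt_floor_add_one _
  have hfh : (ahat : ℝ) ≤ (a : ℝ) - d := by rw [hahat]; exact Int.floor_le _
  have hfh' : (a : ℝ) - d < ahat + 1 := by rw [hahat]; exact Int.lt_floor_add_one _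
  have ha1R : (1 : ℝ) ≤ (a : ℝ) := by exact_mod_cast ha1
  have hα : (1 - α₀) * m < m := by nlinarith [hα₀.1, hα₀.2]
  have haltm : (a : ℝ) < m := by linarith
  have haM : a < (m : ℤ) := by exact_mod_cast haltm
  -- existence of the a-th order statistic
  have hexa : ∃ k, rank w k = a.toNat := by
    have hmem : a.toNat ∈ Finset.image (rank w) Finset.univ := by
      rw [image_rank hwinj]
      refine Finset.mem_Icc.mpr ⟨?_, ?_⟩ <;> omega
    obtain ⟨k, -, hk⟩ := Finset.mem_image.mp hmem
    exact ⟨k, hk⟩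
  have hk0r : rank w hexa.choose = a.toNat := hexa.choose_spec
  have hOS : orderStat w a.toNat = w hexa.choose := by
    unfold orderStat
    rw [dif_pos hexa]
  have haa : ((a.toNat : ℕ) : ℝ) = (a : ℝ) := by
    have h0 : (0 : ℤ) ≤ a := by omega
    exact_mod_cast Int.toNat_of_nonneg h0
  -- filter equalities
  have hA' : (Finset.univ.filter fun k => (rank u k : ℝ) ≤ (1 - α₀) * (m : ℝ)) =
      (Finset.univ.filter fun k => rank u k ≤ (⌊(1 - α₀) * (m : ℝ)⌋).toNat) := by
    ext k
    simp only [Finset.mem_filter, Finset.mem_univ, true_and]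
    exact castle (myRank_pos u k) _
  have hB' : (Finset.univ.filter fun k => (rank w k : ℝ) ≤ (ahat : ℝ)) =
      (Finset.univ.filter fun k => rank w k ≤ ahat.toNat) := by
    ext k
    simp only [Finset.mem_filter, Finset.mem_univ, true_and]
    rw [castle (myRank_pos w k), Int.floor_intCast]
  -- B ⊆ A
  have hBA : (Finset.univ.filter fun k => (rank w k : ℝ) ≤ (ahat : ℝ)) ⊆
      (Finset.univ.filter fun k => (rank u k : ℝ) ≤ (1 - α₀) * (m : ℝ)) := by
    intro k hk
    simp only [Finset.mem_filter, Finset.mem_univ, true_and] at hk ⊢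
    have h2k : orderStat w a.toNat - w k ≥ ε := h2 k (by linarith)
    rw [hOS] at h2k
    have hsub : (Finset.univ.filter fun k' => u k' ≤ u k) ⊆
        (Finset.univ.filter fun k' => rank w k' ≤ a.toNat) := by
      intro k' hk'
      simp only [Finset.mem_filter, Finset.mem_univ, true_and] at hk' ⊢
      have e1 := abs_lt.mp (h1 k')
      have e2 := abs_lt.mp (h1 k)
      have hwlt : w k' < w hexa.choose := by linarith [e1.1, e2.2]
      have := rank_lt_rank hwlt
      omega
    have hle : rank u k ≤ (Finset.univ.filter fun k' => rank w k' ≤ a.toNat).card :=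
      Finset.card_le_card hsub
    rw [card_filter_myRank_le hwinj] at hle
    have hle2 : (rank u k : ℝ) ≤ ((a.toNat : ℕ) : ℝ) := by
      have : rank u k ≤ a.toNat := le_trans hle (min_le_left _ _)
      exact_mod_cast this
    rw [haa] at hle2
    linarith
  -- cardinality computation
  rw [← hd, Finset.card_sdiff_of_subset hBA, hA', hB', card_filter_myRank_le huinj,
    card_filter_myRank_le hwinj]
  have hx0 : (0 : ℝ) ≤ (1 - α₀) * m := by linarith
  have hfl0 : (0 : ℤ) ≤ ⌊(1 - α₀) * (m : ℝ)⌋ := Int.floor_nonneg.mpr hx0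
  have htAR : ((⌊(1 - α₀) * (m : ℝ)⌋.toNat : ℕ) : ℝ) ≤ (1 - α₀) * m := by
    have h1' := Int.floor_le ((1 - α₀) * (m : ℝ))
    have he : ((⌊(1 - α₀) * (m : ℝ)⌋.toNat : ℕ) : ℝ) = ((⌊(1 - α₀) * (m : ℝ)⌋ : ℤ) : ℝ) := by
      exact_mod_cast Int.toNat_of_nonneg hfl0
    linarith [he ▸ h1']
  have htBR : (ahat : ℝ) ≤ ((ahat.toNat : ℕ) : ℝ) := by
    exact_mod_cast Int.self_le_toNat ahat
  rcases le_total (min (⌊(1 - α₀) * (m : ℝ)⌋.toNat) m) (min ahat.toNat m) with hpq | hqp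
  · rw [Nat.sub_eq_zero_of_le hpq]
    norm_num
    linarith
  · rw [Nat.cast_sub hqp]
    have hp1 : ((min (⌊(1 - α₀) * (m : ℝ)⌋.toNat) m : ℕ) : ℝ) ≤
        ((⌊(1 - α₀) * (m : ℝ)⌋.toNat : ℕ) : ℝ) := by
      exact_mod_cast min_le_left _ _
    rcases le_total (ahat.toNat) m with h | h
    · have hq : min (ahat.toNat) m = ahat.toNat := min_eq_left h
      rw [hq]
      linarith
    · have hq : min (ahat.toNat) m = m := min_eq_right h
      have hp2 : ((min (⌊(1 - α₀) * (m : ℝ)⌋.toNat) m : ℕ) : ℝ) ≤ (m : ℝ) := by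
        exact_mod_cast min_le_right _ _
      rw [hq]
      linarith
end

section
/- Let n ∈ ℕ, α ∈ (0,1), γ₂ > 0, γ₃ ∈ ℝ and Č > 0. Set a_n = ⌊(1−α)n − n^{1−γ₂}⌋ and â_n = ⌊a_n − n^{1−γ₂}⌋, and assume 1 ≤ â_n ≤ n. On a probability space (Ω, F, P), let (W_j)_{j=1}^n be independent random variables each distributed according to the standard normal law N(0,1), and let (U_j)_{j=1}^n be arbitrary real random variables. Define Ĵ_n = {j : r_n(|W_j|) ≤ â_n}, J̃_n = {j : |W_j| ≤ c(α)^{1/2}}, the event Ω̃_n = {| |W|_{(â_n)} − c(α)^{1/2} | < Č·n^{−γ₂}}, the events B_j = {| |W_j| − c(α)^{1/2} | < Č·n^{−γ₂}}, and D̃_n = n^{γ₃} | n^{−1} Σ_{j∈Ĵ_n} U_j − n^{−1} Σ_{j∈J̃_n} U_j |. Then for all p₁ > p ≥ 1: ‖D̃_n‖_p ≤ n^{γ₃} ‖max_{j≤n}|U_j|‖_p · P[B_1] + n^{γ₃} ‖max_{j≤n}|U_j|‖_{p p₁ (p₁−p)^{−1}} · ‖ n^{−1} Σ_{j=1}^n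 ( 1_{B_j} − P[B_j] ) ‖_{p₁} + n^{γ₃} P[Ω̃_n^c]^{1/p₁} ‖max_{j≤n}|U_j|‖_{p p₁ (p₁−p)^{−1}}. -/
open MeasureTheory ProbabilityTheory Filter Finset
open scoped ENNReal

/-- Rank of `x k` within the family `(x k')_{k' ∈ s}`. -/
noncomputable def rankIn (s : Finset ℕ) (x : ℕ → ℝ) (k : ℕ) : ℕ :=
  (s.filter fun k' => x k' ≤ x k).card

/-- The `r`-th order statistic (the `r`-th smallest value) of the family `(x k)_{k ∈ s}`.
For a family with pairwise distinct values, this is the unique value of rank `r`. -/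
noncomputable def orderStatIn (s : Finset ℕ) (x : ℕ → ℝ) (r : ℕ) : ℝ :=
  if h : ∃ k, k ∈ s ∧ rankIn s x k = r then x h.choose else 0


section AuxLemmas


lemma rankIn_mono {s : Finset ℕ} {x : ℕ → ℝ} {j k : ℕ} (h : x j ≤ x k) :
    rankIn s x j ≤ rankIn s x k :=
  Finset.card_le_card ((by intro i hi; simp only [Finset.mem_filter] at *; exact ⟨hi.1, le_trans hi.2 h⟩))

lemma rankIn_strict_mono {s : Finset ℕ} {x : ℕ → ℝ} {j k : ℕ} (hk : k ∈ s) (h : x j < x k) :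
    rankIn s x j < rankIn s x k := by
  refine Finset.card_lt_card ⟨(by intro i hi; simp only [Finset.mem_filter] at *; exact ⟨hi.1, le_trans hi.2 h.le⟩), ?_⟩
  intro hsub
  have hk1 : k ∈ s.filter fun k' => x k' ≤ x k := by simp [hk]
  have := hsub hk1
  simp only [Finset.mem_filter] at this
  exact absurd this.2 (not_le.mpr h)

lemma one_le_rankIn {s : Finset ℕ} {x : ℕ → ℝ} {j : ℕ} (hj : j ∈ s) : 1 ≤ rankIn s x j := by
  have : j ∈ s.filter fun k' => x k' ≤ x j := by simp [hj]
  exact Finset.card_pos.mpr ⟨j, this⟩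

lemma rankIn_le_card {s : Finset ℕ} {x : ℕ → ℝ} {j : ℕ} : rankIn s x j ≤ s.card :=
  Finset.card_le_card (Finset.filter_subset _ _)

lemma rankIn_injOn {s : Finset ℕ} {x : ℕ → ℝ} (hinj : Set.InjOn x s) {j k : ℕ}
    (hj : j ∈ s) (hk : k ∈ s) (h : rankIn s x j = rankIn s x k) : j = k := by
  rcases lt_trichotomy (x j) (x k) with hlt | heq | hgt
  · exact absurd h (rankIn_strict_mono hk hlt).ne
  · exact hinj hj hk heq
  · exact absurd h.symm (rankIn_strict_mono hj hgt).ne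

lemma exists_rankIn_eq {s : Finset ℕ} {x : ℕ → ℝ} (hinj : Set.InjOn x s) {r : ℕ}
    (hr1 : 1 ≤ r) (hr2 : r ≤ s.card) : ∃ k ∈ s, rankIn s x k = r := by
  have himg : s.image (rankIn s x) = Finset.Icc 1 s.card := by
    apply Finset.eq_of_subset_of_card_le
    · intro r hr
      simp only [Finset.mem_image] at hr
      obtain ⟨k, hk, rfl⟩ := hr
      exact Finset.mem_Icc.mpr ⟨one_le_rankIn hk, rankIn_le_card⟩
    · rw [Finset.card_image_of_injOn fun j hj k hk h => rankIn_injOn hinj hj hk h]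
      simp
  have : r ∈ s.image (rankIn s x) := by rw [himg]; exact Finset.mem_Icc.mpr ⟨hr1, hr2⟩
  simpa only [Finset.mem_image] using this

lemma orderStatIn_rank {s : Finset ℕ} {x : ℕ → ℝ} (hinj : Set.InjOn x s) {r k : ℕ}
    (hk : k ∈ s) (hrk : rankIn s x k = r) : orderStatIn s x r = x k := by
  rw [orderStatIn, dif_pos ⟨k, hk, hrk⟩]
  have h : ∃ k, k ∈ s ∧ rankIn s x k = r := ⟨k, hk, hrk⟩
  obtain ⟨hmem, hrank⟩ := h.choose_spec
  rw [rankIn_injOn hinj hmem hk (hrank.trans hrk.symm)]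

lemma rankIn_le_iff {s : Finset ℕ} {x : ℕ → ℝ} (hinj : Set.InjOn x s) {r : ℕ}
    (hr1 : 1 ≤ r) (hr2 : r ≤ s.card) {j : ℕ} (hj : j ∈ s) :
    rankIn s x j ≤ r ↔ x j ≤ orderStatIn s x r := by
  obtain ⟨k, hk, hrk⟩ := exists_rankIn_eq hinj hr1 hr2
  rw [orderStatIn_rank hinj hk hrk]
  constructor
  · intro h
    by_contra hgt
    have := rankIn_strict_mono (s := s) hj (not_le.mp hgt)
    omega
  · intro h
    calc rankIn s x j ≤ rankIn s x k := rankIn_mono h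
    _ = r := hrk

variable {Ω : Type*} [MeasurableSpace Ω]


lemma null_abs_eq (P : Measure Ω) [IsProbabilityMeasure P]
    {f g : Ω → ℝ} (hf : Measurable f) (hg : Measurable g)
    (hind : IndepFun f g P) (hfl : Measure.map f P = gaussianReal 0 1)
    (hgl : Measure.map g P = gaussianReal 0 1) :
    P {ω | |f ω| = |g ω|} = 0 := by
  have hmap : Measure.map (fun ω => (f ω, g ω)) P = (Measure.map f P).prod (Measure.map g P) :=
    (indepFun_iff_map_prod_eq_prod_map_map hf.aemeasurable hg.aemeasurable).mp hind
  have hC : MeasurableSet {p : ℝ × ℝ | |p.1| = |p.2|} :=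
    measurableSet_eq_fun (measurable_fst.abs) (measurable_snd.abs)
  have hset : {ω | |f ω| = |g ω|} = (fun ω => (f ω, g ω)) ⁻¹' {p | |p.1| = |p.2|} := rfl
  rw [hset, ← Measure.map_apply (hf.prodMk hg) hC, hmap, hfl, hgl, Measure.prod_apply hC]
  have hnull : ∀ x : ℝ, (gaussianReal 0 1) {a : ℝ | |x| = |a|} = 0 := by
    intro x
    have hsub : {a : ℝ | |x| = |a|} ⊆ {x, -x} := by
      intro y hy
      simp only [Set.mem_setOf_eq] at hy
      rcases abs_eq_abs.mp hy.symm with h | h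
      · exact Or.inl h
      · exact Or.inr h
    refine measure_mono_null hsub ?_
    refine gaussianReal_absolutelyContinuous 0 one_ne_zero ?_
    exact (Set.toFinite _).measure_zero volume
  have : (fun x : ℝ => (gaussianReal 0 1) (Prod.mk x ⁻¹' {p : ℝ × ℝ | |p.1| = |p.2|}))
      = fun x => 0 := by
    funext x
    exact hnull x
  rw [this]
  simp


lemma as_injOn (P : Measure Ω) [IsProbabilityMeasure P] (n : ℕ)
    (W : ℕ → Ω → ℝ) (hWmeas : ∀ j, Measurable (W j))
    (hWindep : iIndepFun
      (fun j : Fin n => W (j.1 + 1)) P)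
    (hWlaw : ∀ j ∈ Finset.Icc 1 n, Measure.map (W j) P = gaussianReal 0 1) :
    P {ω | ¬ Set.InjOn (fun i => |W i ω|) ((Finset.Icc 1 n : Finset ℕ) : Set ℕ)} = 0 := by
  have hsub : {ω | ¬ Set.InjOn (fun i => |W i ω|) ((Finset.Icc 1 n : Finset ℕ) : Set ℕ)} ⊆
      ⋃ (i : ℕ) (j : ℕ) (_ : i ∈ Finset.Icc 1 n) (_ : j ∈ Finset.Icc 1 n) (_ : i ≠ j),
        {ω | |W i ω| = |W j ω|} := by
    intro ω hω
    simp only [Set.mem_setOf_eq, Set.InjOn, not_forall] at hω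
    obtain ⟨i, hi, j, hj, heq, hne⟩ := hω
    simp only [Set.mem_iUnion]
    exact ⟨i, j, by simpa using hi, by simpa using hj, hne, heq⟩
  refine measure_mono_null hsub ?_
  refine measure_iUnion_null fun i => measure_iUnion_null fun j =>
    measure_iUnion_null fun hi => measure_iUnion_null fun hj => measure_iUnion_null fun hne => ?_
  have hi' := Finset.mem_Icc.mp hi
  have hj' := Finset.mem_Icc.mp hj
  have hind := hWindep.indepFun (i := ⟨i - 1, by omega⟩) (j := ⟨j - 1, by omega⟩)
    (by simp only [ne_eq, Fin.mk.injEq]; omega)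
  simp only at hind
  have hii : i - 1 + 1 = i := by omega
  have hjj : j - 1 + 1 = j := by omega
  rw [hii, hjj] at hind
  exact null_abs_eq P (hWmeas i) (hWmeas j) hind (hWlaw i hi) (hWlaw j hj)

lemma sum_filter_diff_abs_le {s G : Finset ℕ} (f : ℕ → ℝ) (hGs : G ⊆ s)
    (p q : ℕ → Prop) [DecidablePred p] [DecidablePred q]
    (hsd : ∀ j ∈ s, ((p j ∧ ¬ q j) ∨ (q j ∧ ¬ p j)) → j ∈ G) :
    |∑ j ∈ s.filter p, f j - ∑ j ∈ s.filter q, f j| ≤ ∑ j ∈ G, |f j| := by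
  set A := s.filter p with hA
  set B := s.filter q with hB
  have hsub : (A \ B) ∪ (B \ A) ⊆ G := by
    intro j hj
    rcases Finset.mem_union.mp hj with h | h
    · rw [Finset.mem_sdiff, hA, hB, Finset.mem_filter] at h
      have hjs := h.1.1
      refine hsd j hjs (Or.inl ⟨h.1.2, fun hq => h.2 (Finset.mem_filter.mpr ⟨hjs, hq⟩)⟩)
    · rw [Finset.mem_sdiff, hA, hB, Finset.mem_filter] at h
      have hjs := h.1.1
      refine hsd j hjs (Or.inr ⟨h.1.2, fun hp => h.2 (Finset.mem_filter.mpr ⟨hjs, hp⟩)⟩)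
  have key : ∑ j ∈ A, f j - ∑ j ∈ B, f j = ∑ j ∈ A \ B, f j - ∑ j ∈ B \ A, f j :=
    (Finset.sum_sdiff_sub_sum_sdiff).symm
  rw [key]
  calc |∑ j ∈ A \ B, f j - ∑ j ∈ B \ A, f j|
      ≤ |∑ j ∈ A \ B, f j| + |∑ j ∈ B \ A, f j| := abs_sub _ _
    _ ≤ ∑ j ∈ A \ B, |f j| + ∑ j ∈ B \ A, |f j| :=
        add_le_add (Finset.abs_sum_le_sum_abs _ _) (Finset.abs_sum_le_sum_abs _ _)
    _ = ∑ j ∈ (A \ B) ∪ (B \ A), |f j| :=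
        (Finset.sum_union (disjoint_sdiff_sdiff)).symm
    _ ≤ ∑ j ∈ G, |f j| :=
        Finset.sum_le_sum_of_subset_of_nonneg hsub (fun _ _ _ => abs_nonneg _)


lemma core_holder (P : Measure Ω) (N : Ω → ℝ≥0∞) (hN : Measurable N)
    (b : ℝ≥0∞) (S : Ω → ℝ≥0∞) (hS : Measurable S)
    (T : Set Ω) (hT : MeasurableSet T)
    (p p₁ q : ℝ) (hp : 1 ≤ p) (hpp₁ : p < p₁) (hq : q = p * p₁ / (p₁ - p)) :
    (∫⁻ ω, (N ω * (b + S ω + T.indicator 1 ω)) ^ p ∂P) ^ (1/p)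
      ≤ (∫⁻ ω, N ω ^ p ∂P) ^ (1/p) * b
        + (∫⁻ ω, N ω ^ q ∂P) ^ (1/q) * (∫⁻ ω, S ω ^ p₁ ∂P) ^ (1/p₁)
        + (P T) ^ (1/p₁) * (∫⁻ ω, N ω ^ q ∂P) ^ (1/q) := by
  have hp0 : 0 < p := lt_of_lt_of_le one_pos hp
  have hp₁0 : 0 < p₁ := lt_trans hp0 hpp₁
  have hsub : 0 < p₁ - p := sub_pos.mpr hpp₁
  have hq0 : 0 < q := by rw [hq]; positivity
  have hqp : q / p = p₁ / (p₁ - p) := by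
    rw [hq]; field_simp
  have hconj : (q / p).HolderConjugate (p₁ / p) := by
    rw [Real.holderConjugate_iff]
    constructor
    · rw [hqp]; rw [one_lt_div hsub]; linarith
    · rw [hqp, inv_div, inv_div]
      field_simp; ring
  set I : Ω → ℝ≥0∞ := T.indicator 1 with hI
  have hImeas : Measurable I := measurable_one.indicator hT
  have hIpow : ∀ z : ℝ, 0 < z → ∀ ω, I ω ^ z = I ω := by
    intro z hz ω
    by_cases hω : ω ∈ T
    · simp [hI, Set.indicator_of_mem hω]
    · simp [hI, Set.indicator_of_notMem hω, ENNReal.zero_rpow_of_pos hz]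
  -- Hölder for a measurable factor g against N, with exponents (q/p, p₁/p) after taking p-th power
  have holder : ∀ g : Ω → ℝ≥0∞, Measurable g →
      (∫⁻ ω, (N ω * g ω) ^ p ∂P) ^ (1/p)
        ≤ (∫⁻ ω, N ω ^ q ∂P) ^ (1/q) * (∫⁻ ω, g ω ^ p₁ ∂P) ^ (1/p₁) := by
    intro g hg
    have h1 : (∫⁻ ω, (N ω * g ω) ^ p ∂P)
        ≤ (∫⁻ ω, (N ω ^ p) ^ (q/p) ∂P) ^ (1/(q/p))
          * (∫⁻ ω, (g ω ^ p) ^ (p₁/p) ∂P) ^ (1/(p₁/p)) := by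
      have := ENNReal.lintegral_mul_le_Lp_mul_Lq P hconj
        (hN.pow_const p).aemeasurable (hg.pow_const p).aemeasurable
      calc ∫⁻ ω, (N ω * g ω) ^ p ∂P
          = ∫⁻ ω, ((fun ω => N ω ^ p) * fun ω => g ω ^ p) ω ∂P := by
            congr 1; funext ω
            simp [ENNReal.mul_rpow_of_nonneg _ _ hp0.le]
        _ ≤ _ := this
    have e1 : ∀ ω, (N ω ^ p) ^ (q/p) = N ω ^ q := by
      intro ω; rw [← ENNReal.rpow_mul]; congr 1; field_simp
    have e2 : ∀ ω, (g ω ^ p) ^ (p₁/p) = g ω ^ p₁ := by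
      intro ω; rw [← ENNReal.rpow_mul]; congr 1; field_simp
    simp only [e1, e2] at h1
    calc (∫⁻ ω, (N ω * g ω) ^ p ∂P) ^ (1/p)
        ≤ ((∫⁻ ω, N ω ^ q ∂P) ^ (1/(q/p)) * (∫⁻ ω, g ω ^ p₁ ∂P) ^ (1/(p₁/p))) ^ (1/p) :=
          ENNReal.rpow_le_rpow h1 (by positivity)
      _ = (∫⁻ ω, N ω ^ q ∂P) ^ (1/q) * (∫⁻ ω, g ω ^ p₁ ∂P) ^ (1/p₁) := by
          rw [ENNReal.mul_rpow_of_nonneg _ _ (by positivity), ← ENNReal.rpow_mul,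
            ← ENNReal.rpow_mul]
          congr 2
          · field_simp
          · field_simp
  -- split integrand into three summands
  have hsplit : (fun ω => (N ω * (b + S ω + I ω)) ^ p)
      = fun ω => (((fun ω => N ω * b) + fun ω => N ω * S ω) ω + N ω * I ω) ^ p := by
    funext ω; simp [mul_add]
  rw [hsplit]
  have m1 : AEMeasurable (fun ω => N ω * b) P := (hN.mul_const b).aemeasurable
  have m2 : AEMeasurable (fun ω => N ω * S ω) P := (hN.mul hS).aemeasurable
  have m3 : AEMeasurable (fun ω => N ω * I ω) P := (hN.mul hImeas).aemeasurable
  calc (∫⁻ ω, (((fun ω => N ω * b) + fun ω => N ω * S ω) ω + N ω * I ω) ^ p ∂P) ^ (1/p)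
      ≤ (∫⁻ ω, (((fun ω => N ω * b) + fun ω => N ω * S ω) ω) ^ p ∂P) ^ (1/p)
        + (∫⁻ ω, (N ω * I ω) ^ p ∂P) ^ (1/p) :=
        ENNReal.lintegral_Lp_add_le (m1.add m2) m3 hp
    _ ≤ ((∫⁻ ω, (N ω * b) ^ p ∂P) ^ (1/p) + (∫⁻ ω, (N ω * S ω) ^ p ∂P) ^ (1/p))
        + (∫⁻ ω, (N ω * I ω) ^ p ∂P) ^ (1/p) := by
        gcongr
        exact ENNReal.lintegral_Lp_add_le m1 m2 hp
    _ ≤ ((∫⁻ ω, N ω ^ p ∂P) ^ (1/p) * b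
          + (∫⁻ ω, N ω ^ q ∂P) ^ (1/q) * (∫⁻ ω, S ω ^ p₁ ∂P) ^ (1/p₁))
        + (P T) ^ (1/p₁) * (∫⁻ ω, N ω ^ q ∂P) ^ (1/q) := by
        gcongr
        · -- constant b term
          have : (∫⁻ ω, (N ω * b) ^ p ∂P) = (∫⁻ ω, N ω ^ p ∂P) * b ^ p := by
            rw [← lintegral_mul_const _ (hN.pow_const p)]
            congr 1; funext ω
            rw [ENNReal.mul_rpow_of_nonneg _ _ hp0.le]
          rw [this, ENNReal.mul_rpow_of_nonneg _ _ (by positivity), ← ENNReal.rpow_mul]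
          rw [mul_one_div_cancel hp0.ne', ENNReal.rpow_one]
        · exact holder S hS
        · -- indicator term
          have := holder I hImeas
          rw [show (∫⁻ ω, I ω ^ p₁ ∂P) = P T by
            rw [← lintegral_indicator_one hT]; congr 1; funext ω; rw [hIpow p₁ hp₁0]] at this
          exact this.trans_eq (mul_comm _ _)

end AuxLemmas

/-- Lemma 4.5(ii) (Lemma 2.9 of Inatsugu–Yoshida): three-term `L^p` bound for the
difference of the averages of `U` over the Brownian rank filter `Ĵ_n` and over the
Gaussian-threshold set `J̃_n`. -/
theorem stmt_11 {Ω : Type*} [MeasurableSpace Ω] (P : Measure Ω) [IsProbabilityMeasure P]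
    (n : ℕ) (α γ₂ γ₃ Cc : ℝ) (hα : α ∈ Set.Ioo (0 : ℝ) 1) (hγ₂ : 0 < γ₂) (hCc : 0 < Cc)
    (a : ℤ) (ha : a = ⌊(1 - α) * (n : ℝ) - (n : ℝ) ^ (1 - γ₂)⌋)
    (ahat : ℤ) (hahat : ahat = ⌊(a : ℝ) - (n : ℝ) ^ (1 - γ₂)⌋)
    (hahat1 : 1 ≤ ahat) (hahatn : ahat ≤ (n : ℤ))
    (c : ℝ) (hc : 0 < c)
    (hcα : gaussianReal 0 1 {x : ℝ | x ^ 2 ≤ c} = ENNReal.ofReal (1 - α))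
    (W : ℕ → Ω → ℝ) (hWmeas : ∀ j, Measurable (W j))
    (hWindep : iIndepFun
      (fun j : Fin n => W (j.1 + 1)) P)
    (hWlaw : ∀ j ∈ Finset.Icc 1 n, Measure.map (W j) P = gaussianReal 0 1)
    (U : ℕ → Ω → ℝ)
    (p p₁ : ℝ) (hp : 1 ≤ p) (hpp₁ : p < p₁) :
    eLpNorm (fun ω =>
        (n : ℝ) ^ γ₃ *
          |(1 / (n : ℝ)) * ∑ j ∈ (Finset.Icc 1 n).filter
              (fun j => rankIn (Finset.Icc 1 n) (fun i => |W i ω|) j ≤ ahat.toNat), U j ω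
          - (1 / (n : ℝ)) * ∑ j ∈ (Finset.Icc 1 n).filter
              (fun j => |W j ω| ≤ Real.sqrt c), U j ω|)
        (ENNReal.ofReal p) P
      ≤ ENNReal.ofReal ((n : ℝ) ^ γ₃) *
          eLpNorm (fun ω => ⨆ j ∈ Finset.Icc 1 n, |U j ω|) (ENNReal.ofReal p) P *
          P {ω : Ω | abs (|W 1 ω| - Real.sqrt c) < Cc * (n : ℝ) ^ (-γ₂)}
        + ENNReal.ofReal ((n : ℝ) ^ γ₃) *
          eLpNorm (fun ω => ⨆ j ∈ Finset.Icc 1 n, |U j ω|)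
            (ENNReal.ofReal (p * p₁ / (p₁ - p))) P *
          eLpNorm (fun ω =>
              (1 / (n : ℝ)) * ∑ j ∈ Finset.Icc 1 n,
                ((if abs (|W j ω| - Real.sqrt c) < Cc * (n : ℝ) ^ (-γ₂) then (1 : ℝ) else 0)
                  - (P {ω' : Ω | abs (|W j ω'| - Real.sqrt c)
                        < Cc * (n : ℝ) ^ (-γ₂)}).toReal))
            (ENNReal.ofReal p₁) P
        + ENNReal.ofReal ((n : ℝ) ^ γ₃) *
          (P ({ω : Ω | abs (orderStatIn (Finset.Icc 1 n) (fun i => |W i ω|) ahat.toNat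
              - Real.sqrt c) < Cc * (n : ℝ) ^ (-γ₂)}ᶜ)) ^ (1 / p₁) *
          eLpNorm (fun ω => ⨆ j ∈ Finset.Icc 1 n, |U j ω|)
            (ENNReal.ofReal (p * p₁ / (p₁ - p))) P := by
  classical
  -- basic numeric facts
  have hn : 1 ≤ n := by
    have h1 : (1:ℤ) ≤ (n:ℤ) := le_trans hahat1 hahatn
    exact_mod_cast h1
  have hnR : (0:ℝ) < n := by exact_mod_cast hn
  have hp0 : 0 < p := lt_of_lt_of_le one_pos hp
  have hp₁0 : 0 < p₁ := lt_trans hp0 hpp₁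
  set q : ℝ := p * p₁ / (p₁ - p) with hqdef
  have hq0 : 0 < q := by rw [hqdef]; have := sub_pos.mpr hpp₁; positivity
  have hr1 : 1 ≤ ahat.toNat := by omega
  have hr2 : ahat.toNat ≤ (Finset.Icc 1 n).card := by rw [Nat.card_Icc]; omega
  have h1s : (1:ℕ) ∈ Finset.Icc 1 n := by simp [Finset.mem_Icc]; omega
  set ε : ℝ := Cc * (n : ℝ) ^ (-γ₂) with hεdef
  have hε : 0 < ε := by
    rw [hεdef]
    exact mul_pos hCc (Real.rpow_pos_of_pos hnR _)
  have hγpos : 0 < (n : ℝ) ^ γ₃ := Real.rpow_pos_of_pos hnR _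
  -- the event sets B_j
  have hA : MeasurableSet {x : ℝ | |(|x|) - Real.sqrt c| < ε} :=
    measurableSet_lt ((measurable_id.abs.sub measurable_const).abs) measurable_const
  have hBmeas : ∀ j : ℕ, MeasurableSet {ω : Ω | abs (|W j ω| - Real.sqrt c) < ε} := fun j =>
    (hWmeas j) hA
  have hBval : ∀ j ∈ Finset.Icc 1 n, P {ω : Ω | abs (|W j ω| - Real.sqrt c) < ε}
      = gaussianReal 0 1 {x : ℝ | |(|x|) - Real.sqrt c| < ε} := by
    intro j hj
    rw [← hWlaw j hj, Measure.map_apply (hWmeas j) hA]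
    rfl
  set β : ℝ := (P {ω : Ω | abs (|W 1 ω| - Real.sqrt c) < ε}).toReal with hβdef
  have hβ : ∀ j ∈ Finset.Icc 1 n,
      (P {ω : Ω | abs (|W j ω| - Real.sqrt c) < ε}).toReal = β := by
    intro j hj
    rw [hβdef, hBval j hj, hBval 1 h1s]
  have hβ0 : 0 ≤ β := ENNReal.toReal_nonneg
  -- the max function M
  set M : Ω → ℝ := fun ω => ⨆ j ∈ Finset.Icc 1 n, |U j ω| with hMdef
  have hbdd : ∀ ω, BddAbove (Set.range fun j => ⨆ (_ : j ∈ Finset.Icc 1 n), |U j ω|) := by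
    intro ω
    refine ⟨∑ j ∈ Finset.Icc 1 n, |U j ω|, ?_⟩
    rintro y ⟨j, rfl⟩
    by_cases hj : j ∈ Finset.Icc 1 n
    · haveI : Nonempty (j ∈ Finset.Icc 1 n) := ⟨hj⟩
      exact le_trans (le_of_eq ciSup_const)
        (Finset.single_le_sum (f := fun i => |U i ω|) (fun i _ => abs_nonneg _) hj)
    · haveI : IsEmpty (j ∈ Finset.Icc 1 n) := ⟨hj⟩
      exact le_trans (le_of_eq (Real.iSup_of_isEmpty _))
        (Finset.sum_nonneg fun i _ => abs_nonneg _)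
  have hMle : ∀ j ∈ Finset.Icc 1 n, ∀ ω, |U j ω| ≤ M ω := by
    intro j hj ω
    haveI : Nonempty (j ∈ Finset.Icc 1 n) := ⟨hj⟩
    exact le_trans (le_of_eq ciSup_const.symm) (le_ciSup (hbdd ω) j)
  have hM0 : ∀ ω, 0 ≤ M ω := fun ω => le_trans (abs_nonneg _) (hMle 1 h1s ω)
  -- the centered indicator average S
  set Sf : Ω → ℝ := fun ω =>
      (1 / (n : ℝ)) * ∑ j ∈ Finset.Icc 1 n,
        ((if abs (|W j ω| - Real.sqrt c) < ε then (1 : ℝ) else 0)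
          - (P {ω' : Ω | abs (|W j ω'| - Real.sqrt c) < ε}).toReal) with hSfdef
  have hSmeas : Measurable Sf := by
    refine Measurable.const_mul ?_ _
    refine Finset.measurable_sum _ fun j _ => ?_
    exact (Measurable.ite (hBmeas j) measurable_const measurable_const).sub measurable_const
  -- the order-statistic event
  set OmT : Set Ω := {ω : Ω | abs (orderStatIn (Finset.Icc 1 n) (fun i => |W i ω|) ahat.toNat
      - Real.sqrt c) < ε} with hOmTdef
  set T : Set Ω := toMeasurable P OmTᶜ with hTdef
  have hTmeas : MeasurableSet T := measurableSet_toMeasurable _ _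
  have hPT : P T = P OmTᶜ := measure_toMeasurable _
  have hOsub : OmTᶜ ⊆ T := subset_toMeasurable _ _
  -- a.e. injectivity
  have haeinj : ∀ᵐ ω ∂P, Set.InjOn (fun i => |W i ω|) ((Finset.Icc 1 n : Finset ℕ) : Set ℕ) := by
    rw [ae_iff]
    exact as_injOn P n W hWmeas hWindep hWlaw
  -- the function D
  set D : Ω → ℝ := fun ω =>
      (n : ℝ) ^ γ₃ *
        |(1 / (n : ℝ)) * ∑ j ∈ (Finset.Icc 1 n).filter
            (fun j => rankIn (Finset.Icc 1 n) (fun i => |W i ω|) j ≤ ahat.toNat), U j ω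
        - (1 / (n : ℝ)) * ∑ j ∈ (Finset.Icc 1 n).filter
            (fun j => |W j ω| ≤ Real.sqrt c), U j ω| with hDdef
  -- pointwise bound on the injectivity event
  have hkey : ∀ ω, Set.InjOn (fun i => |W i ω|) ((Finset.Icc 1 n : Finset ℕ) : Set ℕ) →
      |D ω| ≤ (n : ℝ) ^ γ₃ *
        (M ω * (β + |Sf ω| + T.indicator (fun _ => (1:ℝ)) ω)) := by
    intro ω hinj
    have habs : |D ω| = D ω := abs_of_nonneg (by
      rw [hDdef]; exact mul_nonneg hγpos.le (abs_nonneg _))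
    rw [habs, hDdef]
    simp only
    rw [← mul_sub, abs_mul, abs_of_nonneg (by positivity : (0:ℝ) ≤ 1 / (n:ℝ))]
    have hind0 : 0 ≤ T.indicator (fun _ => (1:ℝ)) ω :=
      Set.indicator_nonneg (fun _ _ => zero_le_one) ω
    have hiff : ∀ j ∈ Finset.Icc 1 n,
        (rankIn (Finset.Icc 1 n) (fun i => |W i ω|) j ≤ ahat.toNat ↔
          |W j ω| ≤ orderStatIn (Finset.Icc 1 n) (fun i => |W i ω|) ahat.toNat) :=
      fun j hj => rankIn_le_iff hinj hr1 hr2 hj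
    by_cases hΩ : ω ∈ OmT
    · -- on the good event
      have hOS : |orderStatIn (Finset.Icc 1 n) (fun i => |W i ω|) ahat.toNat
          - Real.sqrt c| < ε := hΩ
      have hOS' := abs_lt.mp hOS
      have hsd : ∀ j ∈ Finset.Icc 1 n,
          (((fun j => rankIn (Finset.Icc 1 n) (fun i => |W i ω|) j ≤ ahat.toNat) j ∧
              ¬ (fun j => |W j ω| ≤ Real.sqrt c) j) ∨
            ((fun j => |W j ω| ≤ Real.sqrt c) j ∧
              ¬ (fun j => rankIn (Finset.Icc 1 n) (fun i => |W i ω|) j ≤ ahat.toNat) j)) →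
          j ∈ (Finset.Icc 1 n).filter (fun j => |(|W j ω|) - Real.sqrt c| < ε) := by
        intro j hj hcase
        rw [Finset.mem_filter]
        refine ⟨hj, ?_⟩
        rcases hcase with ⟨h1, h2⟩ | ⟨h1, h2⟩
        · have hle : |W j ω| ≤ orderStatIn (Finset.Icc 1 n) (fun i => |W i ω|) ahat.toNat :=
            (hiff j hj).mp h1
          have h2' : ¬ |W j ω| ≤ Real.sqrt c := h2
          push_neg at h2'
          rw [abs_lt]
          exact ⟨by linarith, by linarith [hOS'.2]⟩
        · have hgt : orderStatIn (Finset.Icc 1 n) (fun i => |W i ω|) ahat.toNat < |W j ω| := by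
            by_contra hle
            push_neg at hle
            exact h2 ((hiff j hj).mpr hle)
          have h1' : |W j ω| ≤ Real.sqrt c := h1
          rw [abs_lt]
          exact ⟨by linarith [hOS'.1], by linarith⟩
      have bound1 := sum_filter_diff_abs_le (fun j => U j ω)
        (Finset.filter_subset (fun j => |(|W j ω|) - Real.sqrt c| < ε) (Finset.Icc 1 n))
        _ _ hsd
      set F : Finset ℕ := (Finset.Icc 1 n).filter (fun j => |(|W j ω|) - Real.sqrt c| < ε)
        with hF
      have bound2 : ∑ j ∈ F, |U j ω| ≤ (F.card : ℝ) * M ω := by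
        calc ∑ j ∈ F, |U j ω| ≤ ∑ _j ∈ F, M ω :=
              Finset.sum_le_sum fun j hj => hMle j (Finset.filter_subset _ _ hj) ω
          _ = (F.card : ℝ) * M ω := by rw [Finset.sum_const, nsmul_eq_mul]
      have bound3 : (1 / (n:ℝ)) * (F.card : ℝ) = β + Sf ω := by
        have hsum : ∑ j ∈ Finset.Icc 1 n,
            ((if abs (|W j ω| - Real.sqrt c) < ε then (1 : ℝ) else 0)
              - (P {ω' : Ω | abs (|W j ω'| - Real.sqrt c) < ε}).toReal)
            = (F.card : ℝ) - (n : ℝ) * β := by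
          rw [Finset.sum_sub_distrib]
          congr 1
          · rw [Finset.sum_boole]
          · rw [Finset.sum_congr rfl (fun j hj => hβ j hj), Finset.sum_const, nsmul_eq_mul,
              Nat.card_Icc]
            norm_num
        rw [hSfdef]
        simp only
        rw [hsum]
        field_simp
        ring
      calc (n:ℝ) ^ γ₃ * (1 / (n:ℝ) *
            |∑ j ∈ (Finset.Icc 1 n).filter
                (fun j => rankIn (Finset.Icc 1 n) (fun i => |W i ω|) j ≤ ahat.toNat), U j ω
              - ∑ j ∈ (Finset.Icc 1 n).filter (fun j => |W j ω| ≤ Real.sqrt c), U j ω|)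
          ≤ (n:ℝ) ^ γ₃ * (1 / (n:ℝ) * ((F.card : ℝ) * M ω)) := by
            gcongr
            exact le_trans bound1 bound2
        _ = (n:ℝ) ^ γ₃ * (M ω * ((1 / (n:ℝ)) * (F.card : ℝ))) := by ring
        _ = (n:ℝ) ^ γ₃ * (M ω * (β + Sf ω)) := by rw [bound3]
        _ ≤ (n:ℝ) ^ γ₃ * (M ω * (β + |Sf ω| + T.indicator (fun _ => (1:ℝ)) ω)) := by
            refine mul_le_mul_of_nonneg_left (mul_le_mul_of_nonneg_left ?_ (hM0 ω)) hγpos.le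
            have := le_abs_self (Sf ω)
            linarith
    · -- off the good event
      have hT1 : T.indicator (fun _ => (1:ℝ)) ω = 1 :=
        Set.indicator_of_mem (hOsub hΩ) _
      have bound1 := sum_filter_diff_abs_le (fun j => U j ω)
        (le_refl (Finset.Icc 1 n))
        (fun j => rankIn (Finset.Icc 1 n) (fun i => |W i ω|) j ≤ ahat.toNat)
        (fun j => |W j ω| ≤ Real.sqrt c)
        (fun j hj _ => hj)
      have bound2 : ∑ j ∈ Finset.Icc 1 n, |U j ω| ≤ (n : ℝ) * M ω := by
        calc ∑ j ∈ Finset.Icc 1 n, |U j ω| ≤ ∑ _j ∈ Finset.Icc 1 n, M ω :=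
              Finset.sum_le_sum fun j hj => hMle j hj ω
          _ = (n : ℝ) * M ω := by
              rw [Finset.sum_const, nsmul_eq_mul, Nat.card_Icc]
              norm_num
      calc (n:ℝ) ^ γ₃ * (1 / (n:ℝ) *
            |∑ j ∈ (Finset.Icc 1 n).filter
                (fun j => rankIn (Finset.Icc 1 n) (fun i => |W i ω|) j ≤ ahat.toNat), U j ω
              - ∑ j ∈ (Finset.Icc 1 n).filter (fun j => |W j ω| ≤ Real.sqrt c), U j ω|)
          ≤ (n:ℝ) ^ γ₃ * (1 / (n:ℝ) * ((n:ℝ) * M ω)) := by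
            gcongr
            exact le_trans bound1 bound2
        _ = (n:ℝ) ^ γ₃ * (M ω * 1) := by field_simp
        _ ≤ (n:ℝ) ^ γ₃ * (M ω * (β + |Sf ω| + T.indicator (fun _ => (1:ℝ)) ω)) := by
            refine mul_le_mul_of_nonneg_left (mul_le_mul_of_nonneg_left ?_ (hM0 ω)) hγpos.le
            rw [hT1]
            have : (0:ℝ) ≤ β + |Sf ω| := add_nonneg hβ0 (abs_nonneg _)
            linarith
  -- ENNReal setup
  set k : ℝ≥0∞ := ENNReal.ofReal ((n:ℝ) ^ γ₃) with hk
  set N : Ω → ℝ≥0∞ := fun ω => (‖M ω‖₊ : ℝ≥0∞) with hN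
  set G₂ : Ω → ℝ≥0∞ := fun ω => (‖Sf ω‖₊ : ℝ≥0∞) with hG₂
  set bB : ℝ≥0∞ := P {ω : Ω | abs (|W 1 ω| - Real.sqrt c) < ε} with hbB
  set G : Ω → ℝ≥0∞ := fun ω => bB + G₂ ω + T.indicator 1 ω with hG
  have hG₂meas : Measurable G₂ := measurable_coe_nnreal_ennreal.comp hSmeas.nnnorm
  have hGmeas : Measurable G := (hG₂meas.const_add bB).add (measurable_one.indicator hTmeas)
  have hGfin : ∀ ω, G ω ≠ ∞ := by
    intro ω
    rw [hG]
    refine ENNReal.add_ne_top.mpr ⟨ENNReal.add_ne_top.mpr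
      ⟨measure_ne_top P _, ENNReal.coe_ne_top⟩, ?_⟩
    by_cases hω : ω ∈ T <;> simp [Set.indicator, hω]
  have hkGfin : ∀ ω, k * G ω ≠ ∞ := fun ω =>
    ENNReal.mul_ne_top ENNReal.ofReal_ne_top (hGfin ω)
  -- a.e. domination in ℝ≥0∞
  have hae : ∀ᵐ ω ∂P, (‖D ω‖₊ : ℝ≥0∞) ≤ k * (N ω * G ω) := by
    filter_upwards [haeinj] with ω hinj
    have hreal := hkey ω hinj
    have e1 : ENNReal.ofReal (M ω) = N ω := (Real.enorm_eq_ofReal (hM0 ω)).symm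
    have e2 : ENNReal.ofReal |Sf ω| = G₂ ω := (Real.enorm_eq_ofReal_abs (Sf ω)).symm
    have e3 : ENNReal.ofReal (T.indicator (fun _ => (1:ℝ)) ω) = T.indicator 1 ω := by
      by_cases hω : ω ∈ T <;> simp [hω]
    have e4 : ENNReal.ofReal β = bB := by
      rw [hβdef, ENNReal.ofReal_toReal (measure_ne_top P _)]
    calc (‖D ω‖₊ : ℝ≥0∞) = ENNReal.ofReal |D ω| := Real.enorm_eq_ofReal_abs _
      _ ≤ ENNReal.ofReal ((n:ℝ) ^ γ₃ *
            (M ω * (β + |Sf ω| + T.indicator (fun _ => (1:ℝ)) ω))) :=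
          ENNReal.ofReal_le_ofReal hreal
      _ = k * (N ω * G ω) := by
          rw [ENNReal.ofReal_mul hγpos.le, ENNReal.ofReal_mul (hM0 ω),
            ENNReal.ofReal_add (add_nonneg hβ0 (abs_nonneg _))
              (Set.indicator_nonneg (fun _ _ => zero_le_one) ω),
            ENNReal.ofReal_add hβ0 (abs_nonneg _), e1, e2, e3, e4, hG]
  -- eLpNorm as lintegral
  have hofp : (ENNReal.ofReal p) ≠ 0 := by
    simp only [ne_eq, ENNReal.ofReal_eq_zero, not_le]; linarith
  have hofp₁ : (ENNReal.ofReal p₁) ≠ 0 := by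
    simp only [ne_eq, ENNReal.ofReal_eq_zero, not_le]; linarith
  have hofq : (ENNReal.ofReal q) ≠ 0 := by
    simp only [ne_eq, ENNReal.ofReal_eq_zero, not_le]; linarith
  have hLHS : eLpNorm D (ENNReal.ofReal p) P
      = (∫⁻ ω, (‖D ω‖₊ : ℝ≥0∞) ^ p ∂P) ^ (1/p) := by
    rw [eLpNorm_eq_lintegral_rpow_enorm_toReal hofp ENNReal.ofReal_ne_top,
      ENNReal.toReal_ofReal hp0.le]
    rfl
  have hMp : eLpNorm M (ENNReal.ofReal p) P = (∫⁻ ω, N ω ^ p ∂P) ^ (1/p) := by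
    rw [eLpNorm_eq_lintegral_rpow_enorm_toReal hofp ENNReal.ofReal_ne_top,
      ENNReal.toReal_ofReal hp0.le]
    rfl
  have hMq : eLpNorm M (ENNReal.ofReal q) P = (∫⁻ ω, N ω ^ q ∂P) ^ (1/q) := by
    rw [eLpNorm_eq_lintegral_rpow_enorm_toReal hofq ENNReal.ofReal_ne_top,
      ENNReal.toReal_ofReal hq0.le]
    rfl
  have hSp₁ : eLpNorm Sf (ENNReal.ofReal p₁) P = (∫⁻ ω, G₂ ω ^ p₁ ∂P) ^ (1/p₁) := by
    rw [eLpNorm_eq_lintegral_rpow_enorm_toReal hofp₁ ENNReal.ofReal_ne_top,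
      ENNReal.toReal_ofReal hp₁0.le]
    rfl
  -- measurable minorant
  obtain ⟨h, hhmeas, hhle, hheq⟩ :=
    exists_measurable_le_lintegral_eq P (fun ω => (‖D ω‖₊ : ℝ≥0∞) ^ p)
  set N' : Ω → ℝ≥0∞ := fun ω => if k * G ω = 0 then 0 else (h ω) ^ (1/p) / (k * G ω) with hN'
  have hN'meas : Measurable N' := by
    refine Measurable.ite ?_ measurable_zero ((hhmeas.pow_const _).div (hGmeas.const_mul k))
    exact (hGmeas.const_mul k) (measurableSet_singleton 0)
  have hN'le : ∀ᵐ ω ∂P, N' ω ≤ N ω := by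
    filter_upwards [hae] with ω hω
    rw [hN']
    dsimp only
    split_ifs with h0
    · exact zero_le
    · rw [ENNReal.div_le_iff h0 (hkGfin ω)]
      calc h ω ^ (1/p) ≤ ((‖D ω‖₊ : ℝ≥0∞) ^ p) ^ (1/p) :=
            ENNReal.rpow_le_rpow (hhle ω) (by positivity)
        _ = (‖D ω‖₊ : ℝ≥0∞) := by
            rw [← ENNReal.rpow_mul, mul_one_div_cancel hp0.ne', ENNReal.rpow_one]
        _ ≤ k * (N ω * G ω) := hω
        _ = N ω * (k * G ω) := by ring
  have hprod : ∀ᵐ ω ∂P, h ω = ((k * N' ω) * G ω) ^ p := by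
    filter_upwards [hae] with ω hω
    have hre : (k * N' ω) * G ω = N' ω * (k * G ω) := by ring
    rw [hre, hN']
    dsimp only
    split_ifs with h0
    · have hD : (‖D ω‖₊ : ℝ≥0∞) = 0 := by
        have h00 : k * (N ω * G ω) = 0 := by
          calc k * (N ω * G ω) = N ω * (k * G ω) := by ring
            _ = 0 := by rw [h0, mul_zero]
        exact le_antisymm (h00 ▸ hω) zero_le
      have hh0 : h ω = 0 := by
        refine le_antisymm ?_ zero_le
        calc h ω ≤ (‖D ω‖₊ : ℝ≥0∞) ^ p := hhle ω
          _ = 0 := by rw [hD, ENNReal.zero_rpow_of_pos hp0]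
      rw [hh0, zero_mul, ENNReal.zero_rpow_of_pos hp0]
    · rw [ENNReal.div_mul_cancel h0 (hkGfin ω), ← ENNReal.rpow_mul,
        one_div_mul_cancel hp0.ne', ENNReal.rpow_one]
  -- Hölder/Minkowski core
  have hcore := core_holder P (fun ω => k * N' ω) (hN'meas.const_mul k) bB G₂ hG₂meas
    T hTmeas p p₁ q hp hpp₁ hqdef
  -- comparison of N' and N integrals
  have hNN : ∀ z : ℝ, 0 < z →
      (∫⁻ ω, (k * N' ω) ^ z ∂P) ^ (1/z) ≤ k * (∫⁻ ω, N ω ^ z ∂P) ^ (1/z) := by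
    intro z hz
    have h1 : (fun ω => (k * N' ω) ^ z) = fun ω => k ^ z * N' ω ^ z :=
      funext fun ω => ENNReal.mul_rpow_of_nonneg _ _ hz.le
    rw [h1, lintegral_const_mul _ (hN'meas.pow_const z),
      ENNReal.mul_rpow_of_nonneg _ _ (by positivity), ← ENNReal.rpow_mul,
      mul_one_div_cancel hz.ne', ENNReal.rpow_one]
    refine mul_le_mul_right (ENNReal.rpow_le_rpow ?_ (by positivity)) k
    refine lintegral_mono_ae ?_
    filter_upwards [hN'le] with ω hω
    exact ENNReal.rpow_le_rpow hω hz.le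
  -- final chain
  calc eLpNorm D (ENNReal.ofReal p) P
      = (∫⁻ ω, (‖D ω‖₊ : ℝ≥0∞) ^ p ∂P) ^ (1/p) := hLHS
    _ = (∫⁻ ω, h ω ∂P) ^ (1/p) := by rw [hheq]
    _ = (∫⁻ ω, ((fun ω => k * N' ω) ω * (bB + G₂ ω + T.indicator 1 ω)) ^ p ∂P) ^ (1/p) := by
        rw [lintegral_congr_ae hprod]
    _ ≤ (∫⁻ ω, (k * N' ω) ^ p ∂P) ^ (1/p) * bB
        + (∫⁻ ω, (k * N' ω) ^ q ∂P) ^ (1/q) * (∫⁻ ω, G₂ ω ^ p₁ ∂P) ^ (1/p₁)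
        + (P T) ^ (1/p₁) * (∫⁻ ω, (k * N' ω) ^ q ∂P) ^ (1/q) := hcore
    _ ≤ (k * (∫⁻ ω, N ω ^ p ∂P) ^ (1/p)) * bB
        + (k * (∫⁻ ω, N ω ^ q ∂P) ^ (1/q)) * (∫⁻ ω, G₂ ω ^ p₁ ∂P) ^ (1/p₁)
        + (P T) ^ (1/p₁) * (k * (∫⁻ ω, N ω ^ q ∂P) ^ (1/q)) := by
        gcongr
        · exact hNN p hp0
        · exact hNN q hq0
        · exact hNN q hq0
    _ = k * eLpNorm M (ENNReal.ofReal p) P * bB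
        + k * eLpNorm M (ENNReal.ofReal q) P * eLpNorm Sf (ENNReal.ofReal p₁) P
        + k * (P OmTᶜ) ^ (1/p₁) * eLpNorm M (ENNReal.ofReal q) P := by
        rw [hMp, hMq, hSp₁, hPT]
        ring
end
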